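/- Let A be a real k × n matrix with A Aᵀ = I_k. For a k-element subset S ⊆ {1,…,n}, let A_S denote the k × k submatrix of A formed by the columns indexed by S. Then for every fixed j ∈ {1,…,n}, the sum of det(A_S)² over all k-element subsets S containing j equals α_j² := Σ_{i=1}^k a_{ij}², the squared Euclidean norm of the j-th column of A. -/

import Mathlib

open MeasureTheory ProbabilityTheory Module
open scoped ENNReal NNReal

noncomputable section

namespace BLEPI

/-- Differential entropy of a measure on a space equipped with a canonical volume:
`h(μ) = -∫ log (dμ/dvol) dμ`, which equals `-∫ f log f dvol` when `μ` has density `f`. -/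
def dEnt {E : Type*} [MeasureSpace E] (μ : Measure E) : ℝ :=
  -∫ x, Real.log ((μ.rnDeriv volume x).toReal) ∂μ

/-- Condition (*) : `μ` has a density `f` w.r.t. volume with `∫ f log (1 + f) < ∞`. -/
def CondStar {E : Type*} [MeasureSpace E] (μ : Measure E) : Prop :=
  μ ≪ (volume : Measure E) ∧
    Integrable (fun x => ((μ.rnDeriv volume x).toReal) *
      Real.log (1 + (μ.rnDeriv volume x).toReal)) (volume : Measure E)

/-- Convolution of two measures. -/
def mconv {E : Type*} [MeasurableSpace E] [Add E] (μ ν : Measure E) : Measure E :=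
  (μ.prod ν).map (fun p => p.1 + p.2)

/-- The centered Gaussian product measure on `ℝ^d` whose coordinates are
independent centered Gaussians of variance `v`. -/
def gaussPi (v : ℝ≥0) (d : ℕ) : Measure (EuclideanSpace ℝ (Fin d)) :=
  (Measure.pi fun _ : Fin d => gaussianReal 0 v).map
    (MeasurableEquiv.toLp 2 (Fin d → ℝ))

/-- The standard Gaussian measure `N(0, I_n)` on `Fin n → ℝ`. -/
def stdGauss (n : ℕ) : Measure (Fin n → ℝ) := Measure.pi fun _ : Fin n => gaussianReal 0 1

/-- `μ` is the centered Gaussian measure on `ℝ^d` with covariance matrix `S`. -/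
def IsCenteredGaussian {d : ℕ} (μ : Measure (EuclideanSpace ℝ (Fin d)))
    (S : Matrix (Fin d) (Fin d) ℝ) : Prop :=
  ∃ L : Matrix (Fin d) (Fin d) ℝ, L * L.transpose = S ∧
    μ = (gaussPi 1 d).map
      (fun x => (EuclideanSpace.equiv (Fin d) ℝ).symm (L.mulVec (EuclideanSpace.equiv (Fin d) ℝ x)))

/-- The data `(A, c, r, d)` of a BL-EPI datum (validity conditions are stated separately,
so that induced data with possibly zero-dimensional blocks are also representable). -/
structure Datum where
  m : ℕ
  k : ℕ
  r : Fin k → ℕ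
  nt : Fin m → ℕ
  A : ∀ j : Fin m, ((i : Fin k) → EuclideanSpace ℝ (Fin (r i))) →ₗ[ℝ] EuclideanSpace ℝ (Fin (nt j))
  c : Fin m → ℝ
  d : Fin k → ℝ

/-- The ambient space `ℝ^n = ℝ^{r_1} × ⋯ × ℝ^{r_k}`. -/
abbrev Datum.E (D : Datum) : Type := (i : Fin D.k) → EuclideanSpace ℝ (Fin (D.r i))

/-- The two-copy ambient space `ℝ^{2r_1} × ⋯ × ℝ^{2r_k}`. -/
abbrev Datum.E2 (D : Datum) : Type :=
  (i : Fin D.k) → EuclideanSpace ℝ (Fin (D.r i)) × EuclideanSpace ℝ (Fin (D.r i))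

/-- Validity of a BL-EPI datum: `m, k, r_i` positive, the `A_j` surjective, `c, d` nonneg. -/
def Datum.Valid (D : Datum) : Prop :=
  0 < D.m ∧ 0 < D.k ∧ (∀ i, 0 < D.r i) ∧ (∀ j, Function.Surjective (D.A j)) ∧
    (∀ j, 0 ≤ D.c j) ∧ (∀ i, 0 ≤ D.d i)

/-- Membership of a law `ν` on `ℝ^n` in the class `P(r)`: a probability measure whose
blocks are mutually independent, each block having a density satisfying (*), with zero
mean and finite second moments. -/
def MemP (D : Datum) (ν : Measure D.E) : Prop :=
  IsProbabilityMeasure ν ∧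
  ν = Measure.pi (fun i => ν.map (fun x => x i)) ∧
  (∀ i, CondStar (ν.map (fun x => x i))) ∧
  (∀ i (a : Fin (D.r i)), ∫ x, x i a ∂ν = 0) ∧
  (∀ i (a : Fin (D.r i)), Integrable (fun x => (x i a) ^ 2) ν)

/-- Membership in `P_g(r)` : member of `P(r)` with Gaussian blocks. -/
def MemPg (D : Datum) (ν : Measure D.E) : Prop :=
  MemP D ν ∧ ∀ i, ∃ S : Matrix (Fin (D.r i)) (Fin (D.r i)) ℝ,
    IsCenteredGaussian (ν.map (fun x => x i)) S

/-- Membership of a joint law on `ℝ^{2r_1} × ⋯ × ℝ^{2r_k}` in `P(2r)` : the pairs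
`(X_{i1}, X_{i2})` are mutually independent, each with a density satisfying (*),
zero mean and finite second moments. -/
def MemP2 (D : Datum) (ν : Measure D.E2) : Prop :=
  IsProbabilityMeasure ν ∧
  ν = Measure.pi (fun i => ν.map (fun x => x i)) ∧
  (∀ i, CondStar (ν.map (fun x => x i))) ∧
  (∀ i (a : Fin (D.r i)), ∫ x, (x i).1 a ∂ν = 0) ∧
  (∀ i (a : Fin (D.r i)), ∫ x, (x i).2 a ∂ν = 0) ∧
  (∀ i (a : Fin (D.r i)), Integrable (fun x => ((x i).1 a) ^ 2) ν) ∧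
  (∀ i (a : Fin (D.r i)), Integrable (fun x => ((x i).2 a) ^ 2) ν)

/-- The objective `Σ d_i h(X_i) - Σ c_j h(A_j X)` as a function of the law of `X`. -/
def obj (D : Datum) (ν : Measure D.E) : ℝ :=
  ∑ i, D.d i * dEnt (ν.map (fun x => x i)) - ∑ j, D.c j * dEnt (ν.map (D.A j))

/-- `M = sup_{X ∈ P(r)} (Σ d_i h(X_i) - Σ c_j h(A_j X))`, as an extended real. -/
def Mval (D : Datum) : EReal :=
  sSup {y : EReal | ∃ ν : Measure D.E, MemP D ν ∧ y = ((obj D ν : ℝ) : EReal)}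

/-- `M_g`, the same supremum restricted to Gaussian members. -/
def Mgval (D : Datum) : EReal :=
  sSup {y : EReal | ∃ ν : Measure D.E, MemPg D ν ∧ y = ((obj D ν : ℝ) : EReal)}

/-- Condition (i) of the finiteness theorem: for every `r`-product form subspace
`V = V_1 × ⋯ × V_k`, `Σ d_i dim V_i ≤ Σ c_j dim (A_j V)`. -/
def Cond1 (D : Datum) : Prop :=
  ∀ V : ∀ i : Fin D.k, Submodule ℝ (EuclideanSpace ℝ (Fin (D.r i))),
    ∑ i, D.d i * (finrank ℝ (V i) : ℝ) ≤
      ∑ j, D.c j * (finrank ℝ ((Submodule.pi Set.univ V).map (D.A j)) : ℝ)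

/-- Condition (ii) of the finiteness theorem: `Σ d_i r_i = Σ c_j n_j`. -/
def Cond2 (D : Datum) : Prop :=
  ∑ i, D.d i * (D.r i : ℝ) = ∑ j, D.c j * (D.nt j : ℝ)

/-- The law of `√δ W = (√δ W_1, …, √δ W_k)` on the ambient space. -/
def gaussE (D : Datum) (δ : ℝ) : Measure D.E := Measure.pi fun i => gaussPi δ.toNNReal (D.r i)

/-- `s_{ε,δ}` as a function of the law `ν` of `X`:
`Σ d_i h(X_i + √δ W_i) - Σ c_j h(A_j (X + √δ W) + √ε Z_j)`. -/
def sFun (D : Datum) (ε δ : ℝ) (ν : Measure D.E) : ℝ :=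
  ∑ i, D.d i * dEnt (mconv (ν.map (fun x => x i)) (gaussPi δ.toNNReal (D.r i))) -
    ∑ j, D.c j * dEnt (mconv (ν.map (D.A j))
      (mconv ((gaussE D δ).map (D.A j)) (gaussPi ε.toNNReal (D.nt j))))

/-- The law of the noise `(A_j (√δ W_1) + √ε Z_{j1}, A_j (√δ W_2) + √ε Z_{j2})`. -/
def noise2 (D : Datum) (ε δ : ℝ) (j : Fin D.m) :
    Measure (EuclideanSpace ℝ (Fin (D.nt j)) × EuclideanSpace ℝ (Fin (D.nt j))) :=
  (mconv ((gaussE D δ).map (D.A j)) (gaussPi ε.toNNReal (D.nt j))).prod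
    (mconv ((gaussE D δ).map (D.A j)) (gaussPi ε.toNNReal (D.nt j)))

/-- The two-copy version of `s_{ε,δ}` as a function of the joint law `ν` of `(X_1, X_2)`. -/
def sFun2 (D : Datum) (ε δ : ℝ) (ν : Measure D.E2) : ℝ :=
  ∑ i, D.d i * dEnt (mconv (ν.map (fun x => x i))
      ((gaussPi δ.toNNReal (D.r i)).prod (gaussPi δ.toNNReal (D.r i)))) -
    ∑ j, D.c j * dEnt (mconv
      (ν.map (fun x => (D.A j (fun i => (x i).1), D.A j (fun i => (x i).2))))
      (noise2 D ε δ j))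

/-- `s_{ε,δ}(X ∣ U) = Σ_u P(U = u) s_{ε,δ}(X ∣ U = u)` for a finite-valued `U`. -/
def sCond (D : Datum) (ε δ : ℝ) {Ω ι : Type*} [MeasurableSpace Ω] [Fintype ι]
    (P : Measure Ω) (X : Ω → D.E) (U : Ω → ι) : ℝ :=
  ∑ u : ι, (P (U ⁻¹' {u})).toReal * sFun D ε δ ((P[|U ⁻¹' {u}]).map X)

/-- the two-copy version of `s_{ε,δ}(X₁, X₂ ∣ U)`. -/
def sCond2 (D : Datum) (ε δ : ℝ) {Ω ι : Type*} [MeasurableSpace Ω] [Fintype ι]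
    (P : Measure Ω) (X : Ω → D.E2) (U : Ω → ι) : ℝ :=
  ∑ u : ι, (P (U ⁻¹' {u})).toReal * sFun2 D ε δ ((P[|U ⁻¹' {u}]).map X)

/-- `S_{ε,δ}(X)`: the supremum of `s_{ε,δ}(X ∣ U)` over finite-valued auxiliaries `U`
whose conditional laws lie in `P(r)`; expressed distributionally via finite mixtures. -/
def SVal (D : Datum) (ε δ : ℝ) (ν : Measure D.E) : EReal :=
  sSup {y : EReal | ∃ (t : ℕ) (p : Fin t → ℝ≥0) (νs : Fin t → Measure D.E),
    (∑ u, p u) = 1 ∧ (∀ u, MemP D (νs u)) ∧ (∑ u, ((p u : ℝ≥0∞) • νs u)) = ν ∧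
    y = ((∑ u, (p u : ℝ) * sFun D ε δ (νs u) : ℝ) : EReal)}

/-- The two-copy version `S_{ε,δ}(X₁, X₂)`. -/
def SVal2 (D : Datum) (ε δ : ℝ) (ν : Measure D.E2) : EReal :=
  sSup {y : EReal | ∃ (t : ℕ) (p : Fin t → ℝ≥0) (νs : Fin t → Measure D.E2),
    (∑ u, p u) = 1 ∧ (∀ u, MemP2 D (νs u)) ∧ (∑ u, ((p u : ℝ≥0∞) • νs u)) = ν ∧
    y = ((∑ u, (p u : ℝ) * sFun2 D ε δ (νs u) : ℝ) : EReal)}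

/-- The law of `X₁` under a two-copy law. -/
def marg1 (D : Datum) (ν : Measure D.E2) : Measure D.E := ν.map (fun x i => (x i).1)

/-- The law of `X₂` under a two-copy law. -/
def marg2 (D : Datum) (ν : Measure D.E2) : Measure D.E := ν.map (fun x i => (x i).2)

/-- The joint law of `(X₁, X₂)` when `X₁ ∼ μ₁` and `X₂ ∼ μ₂` are independent. -/
def coupleIndep (D : Datum) (μ₁ μ₂ : Measure D.E) : Measure D.E2 :=
  (μ₁.prod μ₂).map (fun p i => (p.1 i, p.2 i))

/-- `E[X Xᵀ] ⪯ Σ` where `Σ = Diag(Σ_1, …, Σ_k)`, expressed via quadratic forms. -/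
def covLE (D : Datum) (ν : Measure D.E)
    (S : ∀ i, Matrix (Fin (D.r i)) (Fin (D.r i)) ℝ) : Prop :=
  ∀ v : D.E, ∫ x, (∑ i, ∑ a, v i a * x i a) ^ 2 ∂ν ≤
    ∑ i, ∑ a, ∑ b, v i a * S i a b * v i b

/-- `V(Σ) = sup { S_{ε,δ}(X) : X ∈ P(r), E[X Xᵀ] ⪯ Σ }`. -/
def VVal (D : Datum) (ε δ : ℝ) (S : ∀ i, Matrix (Fin (D.r i)) (Fin (D.r i)) ℝ) : EReal :=
  sSup {y : EReal | ∃ ν : Measure D.E, MemP D ν ∧ covLE D ν S ∧ y = SVal D ε δ ν}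

/-- The `r`-product form subspace `U_1 × ⋯ × U_k` of the ambient space. -/
def prodSub (D : Datum) (U : ∀ i, Submodule ℝ (EuclideanSpace ℝ (Fin (D.r i)))) :
    Submodule ℝ D.E := Submodule.pi Set.univ U

/-- `A_j U`, the image of the product subspace under `A_j`. -/
def AjU (D : Datum) (U : ∀ i, Submodule ℝ (EuclideanSpace ℝ (Fin (D.r i)))) (j : Fin D.m) :
    Submodule ℝ (EuclideanSpace ℝ (Fin (D.nt j))) := (prodSub D U).map (D.A j)

/-- Embedding of coordinates of `U` into the ambient space via linear isometries `φ_i`. -/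
def embedMap (D : Datum) (U : ∀ i, Submodule ℝ (EuclideanSpace ℝ (Fin (D.r i))))
    (φ : ∀ i, EuclideanSpace ℝ (Fin (finrank ℝ (U i))) ≃ₗᵢ[ℝ] U i) :
    ((i : Fin D.k) → EuclideanSpace ℝ (Fin (finrank ℝ (U i)))) →ₗ[ℝ] D.E :=
  LinearMap.pi (fun i => (U i).subtype ∘ₗ ((φ i).toLinearEquiv : _ ≃ₗ[ℝ] _).toLinearMap ∘ₗ
    LinearMap.proj i)

lemma embedMap_mem (D : Datum) (U : ∀ i, Submodule ℝ (EuclideanSpace ℝ (Fin (D.r i))))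
    (φ : ∀ i, EuclideanSpace ℝ (Fin (finrank ℝ (U i))) ≃ₗᵢ[ℝ] U i)
    (v : (i : Fin D.k) → EuclideanSpace ℝ (Fin (finrank ℝ (U i)))) :
    embedMap D U φ v ∈ prodSub D U :=
  Submodule.mem_pi.mpr (fun i _ => ((φ i) (v i)).2)

/-- The induced BL-EPI datum on `U = U_1 × ⋯ × U_k`, with maps `Ã_j : U → A_j U` given by
restriction of `A_j`, expressed in coordinates via linear isometries `φ_i`, `ψ_j`. -/
def inducedU (D : Datum) (U : ∀ i, Submodule ℝ (EuclideanSpace ℝ (Fin (D.r i))))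
    (φ : ∀ i, EuclideanSpace ℝ (Fin (finrank ℝ (U i))) ≃ₗᵢ[ℝ] U i)
    (ψ : ∀ j, EuclideanSpace ℝ (Fin (finrank ℝ (AjU D U j))) ≃ₗᵢ[ℝ] AjU D U j) : Datum where
  m := D.m
  k := D.k
  r := fun i => finrank ℝ (U i)
  nt := fun j => finrank ℝ (AjU D U j)
  A := fun j => ((ψ j).symm.toLinearEquiv : _ ≃ₗ[ℝ] _).toLinearMap ∘ₗ
    LinearMap.codRestrict (AjU D U j) (D.A j ∘ₗ embedMap D U φ)
      (fun v => Submodule.mem_map_of_mem (embedMap_mem D U φ v))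
  c := D.c
  d := D.d

/-- Embedding of coordinates of `U^⊥ = U_1^⊥ × ⋯ × U_k^⊥` into the ambient space. -/
def embedMapPerp (D : Datum) (U : ∀ i, Submodule ℝ (EuclideanSpace ℝ (Fin (D.r i))))
    (φ : ∀ i, EuclideanSpace ℝ (Fin (finrank ℝ ((U i)ᗮ))) ≃ₗᵢ[ℝ] (U i)ᗮ) :
    ((i : Fin D.k) → EuclideanSpace ℝ (Fin (finrank ℝ ((U i)ᗮ)))) →ₗ[ℝ] D.E :=
  LinearMap.pi (fun i => ((U i)ᗮ).subtype ∘ₗ ((φ i).toLinearEquiv : _ ≃ₗ[ℝ] _).toLinearMap ∘ₗ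
    LinearMap.proj i)

/-- The induced BL-EPI datum on `U^⊥`, with maps `Ã̃_j x = Π_{(A_j U)^⊥} (A_j x)`
expressed in coordinates via linear isometries `φ'_i`, `ψ'_j`. -/
def inducedUperp (D : Datum) (U : ∀ i, Submodule ℝ (EuclideanSpace ℝ (Fin (D.r i))))
    (φ' : ∀ i, EuclideanSpace ℝ (Fin (finrank ℝ ((U i)ᗮ))) ≃ₗᵢ[ℝ] (U i)ᗮ)
    (ψ' : ∀ j, EuclideanSpace ℝ (Fin (finrank ℝ ((AjU D U j)ᗮ))) ≃ₗᵢ[ℝ] (AjU D U j)ᗮ) :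
    Datum where
  m := D.m
  k := D.k
  r := fun i => finrank ℝ ((U i)ᗮ)
  nt := fun j => finrank ℝ ((AjU D U j)ᗮ)
  A := fun j => ((ψ' j).symm.toLinearEquiv : _ ≃ₗ[ℝ] _).toLinearMap ∘ₗ
    ((((AjU D U j)ᗮ).orthogonalProjectionOnto).toLinearMap ∘ₗ (D.A j ∘ₗ embedMapPerp D U φ'))
  c := D.c
  d := D.d


section CauchyBinetAux

set_option maxHeartbeats 1000000

open Equiv Equiv.Perm Finset Function Matrix

variable {k n : ℕ}

private lemma aux_noninj (A : Matrix (Fin k) (Fin n) ℝ) (B : Matrix (Fin n) (Fin k) ℝ)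
    {p : Fin k → Fin n} (H : ¬Function.Injective p) :
    (∑ σ : Equiv.Perm (Fin k),
      ((Equiv.Perm.sign σ : ℤ) : ℝ) * ∏ x, A (σ x) (p x) * B (p x) x) = 0 := by
  obtain ⟨i, j, hpij, hij⟩ : ∃ i j, p i = p j ∧ i ≠ j := by
    rw [Function.Injective] at H
    push_neg at H
    obtain ⟨i, j, h1, h2⟩ := H
    exact ⟨i, j, h1, h2⟩
  exact
    sum_involution (fun σ _ => σ * Equiv.swap i j)
      (fun σ _ => by
        have : (∏ x, A (σ x) (p x)) = ∏ x, A ((σ * Equiv.swap i j) x) (p x) :=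
          Fintype.prod_equiv (swap i j) _ _ (by simp [apply_swap_eq_self hpij])
        simp [this, sign_swap hij, -sign_swap', prod_mul_distrib])
      (fun σ _ _ => (not_congr mul_swap_eq_iff).mpr hij) (fun _ _ => mem_univ _) fun σ _ =>
      mul_swap_involutive i j σ

private lemma sum_perm_mul (M N : Matrix (Fin k) (Fin k) ℝ) :
    ∑ τ : Equiv.Perm (Fin k), ∑ σ : Equiv.Perm (Fin k),
      ((Equiv.Perm.sign σ : ℤ) : ℝ) * ∏ i, M (σ i) (τ i) * N (τ i) i = M.det * N.det := by
  rw [← Matrix.det_mul]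
  symm
  calc
    Matrix.det (M * N)
        = ∑ p : Fin k → Fin k, ∑ σ : Equiv.Perm (Fin k),
          ((Equiv.Perm.sign σ : ℤ) : ℝ) * ∏ i, M (σ i) (p i) * N (p i) i := by
        simp only [Matrix.det_apply', Matrix.mul_apply, prod_univ_sum, mul_sum,
          Fintype.piFinset_univ]
        rw [Finset.sum_comm]
    _ = ∑ p : Fin k → Fin k with Function.Injective p, ∑ σ : Equiv.Perm (Fin k),
          ((Equiv.Perm.sign σ : ℤ) : ℝ) * ∏ i, M (σ i) (p i) * N (p i) i := by
        refine (sum_subset (filter_subset _ _) fun f _ hinj ↦ aux_noninj M N ?_).symm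
        simpa only [true_and, mem_filter, mem_univ] using hinj
    _ = ∑ τ : Equiv.Perm (Fin k), ∑ σ : Equiv.Perm (Fin k),
          ((Equiv.Perm.sign σ : ℤ) : ℝ) * ∏ i, M (σ i) (τ i) * N (τ i) i := by
        refine sum_bij (fun p h ↦ Equiv.ofBijective p
          (Finite.injective_iff_bijective.mp (mem_filter.1 h).2)) (fun _ _ ↦ mem_univ _)
          (fun _ _ _ _ h ↦ by injection h)
          (fun b _ ↦ ⟨b, mem_filter.2 ⟨mem_univ _, b.injective⟩, coe_fn_injective rfl⟩)
          fun _ _ ↦ rfl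

private lemma image_orderIso (S : Finset (Fin n)) (hS : S.card = k) (τ : Equiv.Perm (Fin k)) :
    Finset.univ.image (fun i => (S.orderIsoOfFin hS (τ i) : Fin n)) = S := by
  apply Finset.eq_of_subset_of_card_le
  · intro y hy
    obtain ⟨i, _, rfl⟩ := Finset.mem_image.mp hy
    exact (S.orderIsoOfFin hS (τ i)).2
  · rw [hS, Finset.card_image_of_injective _ (fun a b hab =>
      τ.injective ((S.orderIsoOfFin hS).injective (Subtype.ext hab))),
      card_univ, Fintype.card_fin]

lemma cauchyBinet (A : Matrix (Fin k) (Fin n) ℝ) (B : Matrix (Fin n) (Fin k) ℝ) :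
    (A * B).det = ∑ S : {S : Finset (Fin n) // S.card = k},
      (A.submatrix id (fun t => (S.1.orderIsoOfFin S.2 t : Fin n))).det *
      (B.submatrix (fun t => (S.1.orderIsoOfFin S.2 t : Fin n)) id).det := by
  calc
    Matrix.det (A * B)
        = ∑ p : Fin k → Fin n, ∑ σ : Equiv.Perm (Fin k),
          ((Equiv.Perm.sign σ : ℤ) : ℝ) * ∏ i, A (σ i) (p i) * B (p i) i := by
        simp only [Matrix.det_apply', Matrix.mul_apply, prod_univ_sum, mul_sum,
          Fintype.piFinset_univ]
        rw [Finset.sum_comm]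
    _ = ∑ p : Fin k → Fin n with Function.Injective p, ∑ σ : Equiv.Perm (Fin k),
          ((Equiv.Perm.sign σ : ℤ) : ℝ) * ∏ i, A (σ i) (p i) * B (p i) i := by
        refine (sum_subset (filter_subset _ _) fun f _ hinj ↦ aux_noninj A B ?_).symm
        simpa only [true_and, mem_filter, mem_univ] using hinj
    _ = ∑ x : {S : Finset (Fin n) // S.card = k} × Equiv.Perm (Fin k),
          ∑ σ : Equiv.Perm (Fin k),
          ((Equiv.Perm.sign σ : ℤ) : ℝ) *
            ∏ i, A (σ i) (x.1.1.orderIsoOfFin x.1.2 (x.2 i)) *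
              B (x.1.1.orderIsoOfFin x.1.2 (x.2 i)) i := by
        refine (Finset.sum_nbij
          (fun x => fun i => (x.1.1.orderIsoOfFin x.1.2 (x.2 i) : Fin n)) ?_ ?_ ?_ ?_).symm
        · intro x _
          simp only [mem_filter, mem_univ, true_and]
          exact fun a b hab => x.2.injective ((x.1.1.orderIsoOfFin x.1.2).injective
            (Subtype.ext hab))
        · rintro ⟨⟨S₁, hS₁⟩, τ₁⟩ - ⟨⟨S₂, hS₂⟩, τ₂⟩ - h
          dsimp only at h
          have hS : S₁ = S₂ := by
            rw [← image_orderIso S₁ hS₁ τ₁, ← image_orderIso S₂ hS₂ τ₂, h]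
          subst hS
          refine Prod.ext rfl ?_
          apply Equiv.ext
          intro i
          have hi := congrFun h i
          show τ₁ i = τ₂ i
          exact (S₁.orderIsoOfFin hS₁).injective (Subtype.ext hi)
        · intro p hp
          have hinj : Function.Injective p := by
            simpa only [mem_coe, true_and, mem_filter, mem_univ] using hp
          have hcard : (Finset.univ.image p).card = k := by
            rw [Finset.card_image_of_injective _ hinj, card_univ, Fintype.card_fin]
          refine ⟨⟨⟨Finset.univ.image p, hcard⟩,
            Equiv.ofBijective (fun i => ((Finset.univ.image p).orderIsoOfFin hcard).symm
              ⟨p i, Finset.mem_image_of_mem p (mem_univ i)⟩)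
              (Finite.injective_iff_bijective.mp (fun a b hab => hinj (by
                have := congrArg (fun z =>
                  (((Finset.univ.image p).orderIsoOfFin hcard) z : Fin n)) hab
                simpa using this)))⟩, mem_univ _, ?_⟩
          funext i
          simp
        · intro x _
          rfl
    _ = ∑ S : {S : Finset (Fin n) // S.card = k},
          (A.submatrix id (fun t => (S.1.orderIsoOfFin S.2 t : Fin n))).det *
          (B.submatrix (fun t => (S.1.orderIsoOfFin S.2 t : Fin n)) id).det := by
        rw [Fintype.sum_prod_type]
        exact Finset.sum_congr rfl fun S _ =>
          sum_perm_mul (A.submatrix id fun t => (S.1.orderIsoOfFin S.2 t : Fin n))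
            (B.submatrix (fun t => (S.1.orderIsoOfFin S.2 t : Fin n)) id)

variable {k n : ℕ}


/-- Sum of squared minors over all k-subsets equals det (A * Aᵀ). -/
private lemma sum_sq_minors (A : Matrix (Fin k) (Fin n) ℝ) :
    ∑ S : {S : Finset (Fin n) // S.card = k},
      (A.submatrix id (fun t => (S.1.orderIsoOfFin S.2 t : Fin n))).det ^ 2
      = (A * A.transpose).det := by
  rw [cauchyBinet A A.transpose]
  refine Finset.sum_congr rfl fun S _ => ?_
  have : A.transpose.submatrix (fun t => (S.1.orderIsoOfFin S.2 t : Fin n)) id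
      = (A.submatrix id (fun t => (S.1.orderIsoOfFin S.2 t : Fin n))).transpose := by
    ext a b; rfl
  rw [this, Matrix.det_transpose, sq]

/-- The squared minor, as a total function of the subset. -/
private def Fsq (A : Matrix (Fin k) (Fin n) ℝ) (S : Finset (Fin n)) : ℝ :=
  if h : S.card = k then
    (A.submatrix id (fun t => (S.orderIsoOfFin h t : Fin n))).det ^ 2 else 0

private lemma Fsq_pos (A : Matrix (Fin k) (Fin n) ℝ) {S : Finset (Fin n)} (h : S.card = k) :
    Fsq A S = (A.submatrix id (fun t => (S.orderIsoOfFin h t : Fin n))).det ^ 2 :=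
  dif_pos h

private lemma sum_Fsq (A : Matrix (Fin k) (Fin n) ℝ) :
    ∑ S ∈ Finset.univ.filter (fun S : Finset (Fin n) => S.card = k), Fsq A S
      = (A * A.transpose).det := by
  rw [Finset.sum_subtype (p := fun S : Finset (Fin n) => S.card = k) _
    (fun x => by simp) (Fsq A), ← sum_sq_minors A]
  exact Finset.sum_congr rfl fun S _ => Fsq_pos A S.2

private lemma main_succ (k m : ℕ) (A : Matrix (Fin k) (Fin (m + 1)) ℝ)
    (hA : A * A.transpose = 1) (j : Fin (m + 1)) :
    ∑ S : {S : Finset (Fin (m + 1)) // S.card = k ∧ j ∈ S},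
        (A.submatrix id (fun t : Fin k => ((S.1.orderIsoOfFin S.2.1) t : Fin (m + 1)))).det ^ 2 =
      ∑ i, (A i j) ^ 2 := by
  classical
  set A' : Matrix (Fin k) (Fin m) ℝ := A.submatrix id j.succAbove with hA'
  -- total sum equals 1
  have h1 : ∑ S ∈ Finset.univ.filter (fun S : Finset (Fin (m + 1)) => S.card = k), Fsq A S
      = 1 := by rw [sum_Fsq A, hA, Matrix.det_one]
  -- A' * A'ᵀ
  have h2 : A' * A'.transpose
      = 1 - Matrix.replicateCol Unit (fun i => A i j) * Matrix.replicateRow Unit (fun i => A i j) := by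
    ext a b
    have hab := congrFun (congrFun hA a) b
    have hsum : (A * A.transpose) a b = ∑ y, A a y * A b y := by
      simp [Matrix.mul_apply, Matrix.transpose_apply]
    have hsplit : ∑ y, A a y * A b y
        = A a j * A b j + ∑ x, A a (j.succAbove x) * A b (j.succAbove x) :=
      Fin.sum_univ_succAbove (fun y => A a y * A b y) j
    have hL : (A' * A'.transpose) a b = ∑ x, A a (j.succAbove x) * A b (j.succAbove x) := by
      simp [hA', Matrix.mul_apply, Matrix.transpose_apply, Matrix.submatrix_apply]
    have hR : (1 - Matrix.replicateCol Unit (fun i => A i j) * Matrix.replicateRow Unit (fun i => A i j)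
          : Matrix (Fin k) (Fin k) ℝ) a b
        = (1 : Matrix (Fin k) (Fin k) ℝ) a b - A a j * A b j := by
      simp [Matrix.sub_apply, Matrix.mul_apply]
    rw [hL, hR]
    rw [hsum, hsplit] at hab
    linarith [hab]
  -- det of A' * A'ᵀ
  have h3 : (A' * A'.transpose).det = 1 - ∑ i, (A i j) ^ 2 := by
    rw [h2]
    have key : (1 : Matrix (Fin k) (Fin k) ℝ)
          + Matrix.replicateCol Unit (fun i => A i j) * Matrix.replicateRow Unit (-(fun i => A i j))
        = 1 - Matrix.replicateCol Unit (fun i => A i j) * Matrix.replicateRow Unit (fun i => A i j) := by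
      have hrow : Matrix.replicateRow Unit (-(fun i : Fin k => A i j))
          = -Matrix.replicateRow Unit (fun i : Fin k => A i j) := by
        ext a b; simp
      rw [hrow, Matrix.mul_neg, sub_eq_add_neg]
    rw [← key, Matrix.det_one_add_replicateCol_mul_replicateRow]
    have : (-(fun i : Fin k => A i j)) ⬝ᵥ (fun i => A i j) = -∑ i, (A i j) ^ 2 := by
      rw [neg_dotProduct, neg_inj]
      simp [dotProduct, sq]
    rw [this]; ring
  -- key : order embedding compatibility
  have key : ∀ (S' : Finset (Fin m)) (h' : S'.card = k) (t : Fin k),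
      ((S'.map j.succAboveOrderEmb.toEmbedding).orderIsoOfFin
        (by rw [Finset.card_map]; exact h') t : Fin (m + 1))
        = j.succAbove (S'.orderIsoOfFin h' t) := by
    intro S' h' t
    have := Finset.orderEmbOfFin_unique
      (s := S'.map j.succAboveOrderEmb.toEmbedding)
      (by rw [Finset.card_map]; exact h')
      (f := fun t => j.succAbove (S'.orderEmbOfFin h' t))
      (fun x => Finset.mem_map_of_mem _ (Finset.orderEmbOfFin_mem S' h' x))
      ((Fin.strictMono_succAbove j).comp (S'.orderEmbOfFin h').strictMono)
    rw [Finset.coe_orderIsoOfFin_apply, Finset.coe_orderIsoOfFin_apply, ← congrFun this t]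
  -- small sum equals big sum over subsets avoiding j
  have h5 : ∑ S' ∈ Finset.univ.filter (fun S : Finset (Fin m) => S.card = k), Fsq A' S'
      = ∑ S ∈ Finset.univ.filter
          (fun S : Finset (Fin (m + 1)) => S.card = k ∧ j ∉ S), Fsq A S := by
    refine Finset.sum_nbij (fun S' => S'.map j.succAboveOrderEmb.toEmbedding) ?_ ?_ ?_ ?_
    · intro S' hS'
      simp only [Finset.mem_filter, Finset.mem_univ, true_and] at hS' ⊢
      refine ⟨by rw [Finset.card_map]; exact hS', ?_⟩
      intro hj
      obtain ⟨z, _, hz⟩ := Finset.mem_map.mp hj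
      exact Fin.succAbove_ne j z hz
    · intro a _ b _ h
      exact Finset.map_injective _ h
    · intro S hS
      simp only [Finset.coe_filter, Finset.mem_univ, true_and, Set.mem_setOf_eq] at hS
      have hsub : S ⊆ Finset.univ.map j.succAboveOrderEmb.toEmbedding := by
        intro x hx
        obtain ⟨z, hz⟩ := Fin.exists_succAbove_eq (show x ≠ j from fun h => hS.2 (h ▸ hx))
        exact Finset.mem_map.mpr ⟨z, Finset.mem_univ z, hz⟩
      obtain ⟨u, -, rfl⟩ := Finset.subset_map_iff.mp hsub
      refine ⟨u, ?_, rfl⟩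
      simp only [Finset.coe_filter, Finset.mem_univ, true_and, Set.mem_setOf_eq]
      have := hS.1
      rwa [Finset.card_map] at this
    · intro S' hS'
      simp only [Finset.mem_filter, Finset.mem_univ, true_and] at hS'
      have hm : (S'.map j.succAboveOrderEmb.toEmbedding).card = k := by
        rw [Finset.card_map]; exact hS'
      rw [Fsq_pos A' hS', Fsq_pos A hm]
      have hmat : A.submatrix id
            (fun t => ((S'.map j.succAboveOrderEmb.toEmbedding).orderIsoOfFin hm t : Fin (m + 1)))
          = A'.submatrix id (fun t => (S'.orderIsoOfFin hS' t : Fin m)) := by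
        ext a t
        exact congrArg (A a) (key S' hS' t)
      rw [hmat]
  -- splitting
  have h6 : ∑ S ∈ Finset.univ.filter (fun S : Finset (Fin (m + 1)) => S.card = k), Fsq A S
      = ∑ S ∈ Finset.univ.filter
          (fun S : Finset (Fin (m + 1)) => S.card = k ∧ j ∈ S), Fsq A S
        + ∑ S ∈ Finset.univ.filter
          (fun S : Finset (Fin (m + 1)) => S.card = k ∧ j ∉ S), Fsq A S := by
    rw [← Finset.sum_filter_add_sum_filter_not
      (Finset.univ.filter (fun S : Finset (Fin (m + 1)) => S.card = k)) (fun S => j ∈ S)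
      (Fsq A), Finset.filter_filter, Finset.filter_filter]
  -- small side value
  have h4 : ∑ S' ∈ Finset.univ.filter (fun S : Finset (Fin m) => S.card = k), Fsq A' S'
      = 1 - ∑ i, (A i j) ^ 2 := by rw [sum_Fsq A', h3]
  -- conclude
  have h7 : ∑ S : {S : Finset (Fin (m + 1)) // S.card = k ∧ j ∈ S},
      (A.submatrix id (fun t : Fin k => ((S.1.orderIsoOfFin S.2.1) t : Fin (m + 1)))).det ^ 2
      = ∑ S ∈ Finset.univ.filter
          (fun S : Finset (Fin (m + 1)) => S.card = k ∧ j ∈ S), Fsq A S := by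
    rw [Finset.sum_subtype (p := fun S : Finset (Fin (m + 1)) => S.card = k ∧ j ∈ S) _
      (fun x => by simp) (Fsq A)]
    exact Finset.sum_congr rfl fun S _ => (Fsq_pos A S.2.1).symm
  rw [h7]
  rw [h1, ← h5, h4] at h6
  linarith


end CauchyBinetAux

/-- For a `k × n` matrix `A` with orthonormal rows and any fixed column index `j`, the sum
of `det(A_S)²` over all `k`-element subsets `S` of columns containing `j` equals `α_j²`,
the squared norm of the `j`-th column of `A`. -/
theorem cauchyBinet_column_coefficient (k n : ℕ) (A : Matrix (Fin k) (Fin n) ℝ)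
    (hA : A * A.transpose = 1) (j : Fin n) :
    ∑ S : {S : Finset (Fin n) // S.card = k ∧ j ∈ S},
        (A.submatrix id (fun t : Fin k => ((S.1.orderIsoOfFin S.2.1) t : Fin n))).det ^ 2 =
      ∑ i, (A i j) ^ 2 := by
  cases n with
  | zero => exact j.elim0
  | succ m => exact main_succ k m A hA j

end BLEPI
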